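/- For continuous-time S-synergy with k ≥ 2, the conditions R(0) = R'(0) = R''(0) = 0 for the rate function R(p) = -μ p + (1-p) α k p ((1-p)e^β + p)^{k-1} are satisfied exactly at the point α/μ = (1/k)(k/(k-1))^{k-1} and β = ln((k-1)/k). -/

import Mathlib

theorem stmt6 (k : ℕ) (hk : 2 ≤ k) (μ α β : ℝ) (hμ : 0 < μ) (hα : 0 < α)
    (R : ℝ → ℝ)
    (hR : ∀ p, R p = -μ * p + (1 - p) * α * k * p * ((1 - p) * Real.exp β + p) ^ (k - 1)) :
    (R 0 = 0 ∧ deriv R 0 = 0 ∧ deriv (deriv R) 0 = 0) ↔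
      (α / μ = (1 / k) * ((k : ℝ) / ((k : ℝ) - 1)) ^ (k - 1) ∧
        β = Real.log (((k : ℝ) - 1) / k)) := by
  obtain ⟨m, rfl⟩ : ∃ m, k = m + 2 := ⟨k - 2, by omega⟩
  set E := Real.exp β with hE
  have hEpos : 0 < E := Real.exp_pos β
  set c : ℝ := α * (m + 2) with hc
  have hcpos : 0 < c := by positivity
  have hRf : R = fun p => -μ * p + c * ((p - p ^ 2) * ((1 - p) * E + p) ^ (m + 1)) := by
    funext p
    rw [hR]
    have : (m + 2 - 1) = m + 1 := by omega
    rw [this]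
    push_cast
    ring
  have hg : ∀ p : ℝ, HasDerivAt (fun p => (1 - p) * E + p) (1 - E) p := by
    intro p
    have h1 : HasDerivAt (fun p : ℝ => (1 - p) * E + p) ((0 - 1) * E + 1) p :=
      (((hasDerivAt_const p (1:ℝ)).sub (hasDerivAt_id p)).mul_const E).add (hasDerivAt_id p)
    convert h1 using 1; ring
  have hq : ∀ p : ℝ, HasDerivAt (fun p : ℝ => p - p ^ 2) (1 - 2 * p) p := by
    intro p
    have h1 : HasDerivAt (fun p : ℝ => p - p ^ 2) (1 - (2 : ℕ) * p ^ (2 - 1)) p :=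
      (hasDerivAt_id p).sub (hasDerivAt_pow 2 p)
    convert h1 using 1; push_cast; ring
  have hgp : ∀ (n : ℕ) (p : ℝ), HasDerivAt (fun p => ((1 - p) * E + p) ^ n)
      (n * ((1 - p) * E + p) ^ (n - 1) * (1 - E)) p := fun n p => (hg p).pow n
  have hD1 : ∀ p : ℝ, HasDerivAt R
      (-μ + c * ((1 - 2 * p) * ((1 - p) * E + p) ^ (m + 1) +
        (p - p ^ 2) * ((m + 1) * ((1 - p) * E + p) ^ m * (1 - E)))) p := by
    intro p
    rw [hRf]
    have h1 : HasDerivAt (fun p : ℝ => -μ * p) (-μ) p := by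
      simpa using (hasDerivAt_id p).const_mul (-μ)
    have h2 : HasDerivAt (fun p : ℝ => (p - p ^ 2) * ((1 - p) * E + p) ^ (m + 1))
        ((1 - 2 * p) * ((1 - p) * E + p) ^ (m + 1) +
          (p - p ^ 2) * ((m + 1) * ((1 - p) * E + p) ^ m * (1 - E))) p := by
      have := (hq p).mul (by simpa using hgp (m + 1) p)
      exact this
    exact h1.add (h2.const_mul c)
  have hderivR : deriv R = fun p =>
      -μ + c * ((1 - 2 * p) * ((1 - p) * E + p) ^ (m + 1) +
        (p - p ^ 2) * ((m + 1) * ((1 - p) * E + p) ^ m * (1 - E))) :=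
    funext fun p => (hD1 p).deriv
  have hR0 : R 0 = 0 := by rw [hRf]; ring
  have hR1 : deriv R 0 = -μ + c * E ^ (m + 1) := by
    rw [hderivR]; norm_num
  -- second derivative at 0
  have hD2 : HasDerivAt (deriv R)
      (c * (-2 * E ^ (m + 1) + 2 * (m + 1) * E ^ m * (1 - E))) 0 := by
    rw [hderivR]
    have hA : HasDerivAt (fun p : ℝ => (1 - 2 * p) * ((1 - p) * E + p) ^ (m + 1))
        ((0 - 2 * 1) * ((1 - 0) * E + 0) ^ (m + 1) +
          (1 - 2 * 0) * ((m + 1) * ((1 - 0) * E + 0) ^ m * (1 - E))) 0 := by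
      have hlin : HasDerivAt (fun p : ℝ => 1 - 2 * p) (0 - 2 * 1) 0 :=
        (hasDerivAt_const (0:ℝ) (1:ℝ)).sub ((hasDerivAt_id (0:ℝ)).const_mul 2)
      have := hlin.mul (by simpa using hgp (m + 1) (0:ℝ))
      refine this.congr_deriv ?_
      norm_num
    have hB : HasDerivAt (fun p : ℝ => (p - p ^ 2) * ((m + 1) * ((1 - p) * E + p) ^ m * (1 - E)))
        ((1 - 2 * 0) * ((m + 1) * ((1 - 0) * E + 0) ^ m * (1 - E)) +
          (0 - 0 ^ 2) * ((m + 1) * (m * ((1 - 0) * E + 0) ^ (m - 1) * (1 - E)) * (1 - E))) 0 := by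
      have hmg : HasDerivAt (fun p : ℝ => (m + 1 : ℝ) * ((1 - p) * E + p) ^ m * (1 - E))
          ((m + 1 : ℝ) * (m * ((1 - 0) * E + 0) ^ (m - 1) * (1 - E)) * (1 - E)) 0 := by
        simpa using (((hgp m (0:ℝ)).const_mul ((m:ℝ) + 1)).mul_const (1 - E))
      exact (hq 0).mul hmg
    have := ((hasDerivAt_const (0:ℝ) (-μ)).add ((hA.add hB).const_mul c))
    refine this.congr_deriv ?_
    ring_nf
  have hR2 : deriv (deriv R) 0 = c * (-2 * E ^ (m + 1) + 2 * (m + 1) * E ^ m * (1 - E)) :=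
    hD2.deriv
  rw [hR0, hR1, hR2]
  have hm2 : ((m:ℝ) + 2) ≠ 0 := by positivity
  have hm1 : ((m:ℝ) + 1) ≠ 0 := by positivity
  have hk1 : ((m + 2 : ℕ) : ℝ) - 1 = (m:ℝ) + 1 := by push_cast; ring
  have hexp : (m + 2 - 1) = m + 1 := by omega
  constructor
  · rintro ⟨-, h1, h2⟩
    have hEeq : E = ((m:ℝ) + 1) / ((m:ℝ) + 2) := by
      have hEm : (0:ℝ) < E ^ m := by positivity
      have : E ^ m * (2 * ((m:ℝ) + 1) * (1 - E) - 2 * E) = 0 := by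
        have h2' : -2 * E ^ (m + 1) + 2 * (m + 1) * E ^ m * (1 - E) = 0 := by
          rcases mul_eq_zero.mp h2 with h | h
          · exact absurd h (ne_of_gt hcpos)
          · exact h
        rw [← h2']; ring
      have := (mul_eq_zero.mp this).resolve_left (ne_of_gt hEm)
      field_simp
      linarith
    have hβ : β = Real.log ((((m + 2 : ℕ) : ℝ) - 1) / ((m + 2 : ℕ) : ℝ)) := by
      rw [hk1]
      have : β = Real.log E := (Real.log_exp β).symm
      rw [this, hEeq]
      push_cast
      ring_nf
    refine ⟨?_, hβ⟩
    have hμeq : μ = α * ((m:ℝ) + 2) * E ^ (m + 1) := by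
      rw [hc] at h1; linarith
    rw [hexp, hk1, hμeq, hEeq]
    simp only [div_pow]
    push_cast
    have h1p : ((m:ℝ) + 1) ^ (m + 1) ≠ 0 := by positivity
    have h2p : ((m:ℝ) + 2) ^ (m + 1) ≠ 0 := by positivity
    field_simp
  · rintro ⟨h1, h2⟩
    have hEeq : E = ((m:ℝ) + 1) / ((m:ℝ) + 2) := by
      rw [hE, h2, hk1]
      rw [Real.exp_log (by positivity)]
      push_cast
      ring
    rw [hexp, hk1] at h1
    have h1p : ((m:ℝ) + 1) ^ (m + 1) ≠ 0 := by positivity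
    have h2p : ((m:ℝ) + 2) ^ (m + 1) ≠ 0 := by positivity
    have hμ' : μ ≠ 0 := ne_of_gt hμ
    have hμeq : μ = α * ((m:ℝ) + 2) * E ^ (m + 1) := by
      rw [hEeq, div_pow]
      rw [div_eq_iff hμ', div_pow] at h1
      push_cast at h1 ⊢
      field_simp at h1 ⊢
      linarith
    have hkey : ((m:ℝ) + 1) * (1 - E) = E := by
      rw [hEeq]; field_simp; ring
    refine ⟨rfl, by show -μ + α * ((m:ℝ) + 2) * E ^ (m + 1) = 0; linarith [hμeq], ?_⟩
    have hbr : -2 * E ^ (m + 1) + 2 * (m + 1) * E ^ m * (1 - E) = 0 := by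
      rw [pow_succ]
      linear_combination 2 * E ^ m * hkey
    rw [hbr, mul_zero]
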